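/- Let z(t) = ∫₀^t ξ(t-τ)y(τ)dτ where ξ : [0,∞) → [0,∞) is absolutely continuous with ξ'(t) ≤ -ξ(0)ξ(t) a.e. and y ∈ L¹_loc(0,∞) is nonnegative. Then z is absolutely continuous, z(0) = 0, and (1/ξ(0))·z'(t) + z(t) ≤ y(t) for a.e. t > 0. -/

import Mathlib

open MeasureTheory Set Real

open Filter Metric Topology Interval in
private lemma ae_hasDerivAt_primitive (f : ℝ → ℝ) (hf : LocallyIntegrable f volume) :
    ∀ᵐ t ∂(volume : Measure ℝ), HasDerivAt (fun x => ∫ s in (0:ℝ)..x, f s) (f t) t := by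
  filter_upwards [(Besicovitch.vitaliFamily (volume : Measure ℝ)).ae_tendsto_average_norm_sub hf]
    with t ht
  have ht' : Tendsto (fun r => ⨍ y in closedBall t r, ‖f y - f t‖) (𝓝[>] 0) (𝓝 0) :=
    ht.comp (Besicovitch.tendsto_filterAt volume t)
  rw [hasDerivAt_iff_tendsto]
  have key : ∀ x : ℝ, x ≠ t →
      ‖x - t‖⁻¹ * ‖(∫ s in (0:ℝ)..x, f s) - (∫ s in (0:ℝ)..t, f s) - (x - t) • f t‖
        ≤ 2 * ⨍ y in closedBall t |x - t|, ‖f y - f t‖ := by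
    intro x hx
    have hint : ∀ a b : ℝ, IntervalIntegrable f volume a b := fun a b =>
      (hf.integrableOn_isCompact isCompact_uIcc).intervalIntegrable
    have h1 : (∫ s in (0:ℝ)..x, f s) - (∫ s in (0:ℝ)..t, f s) = ∫ s in t..x, f s := by
      rw [← intervalIntegral.integral_add_adjacent_intervals (hint 0 t) (hint t x)]; ring
    have h2 : (x - t) • f t = ∫ s in t..x, f t := by
      simp [intervalIntegral.integral_const]
    rw [h1, h2, ← intervalIntegral.integral_sub (hint t x)
      (by simp : IntervalIntegrable (fun _ => f t) volume t x)]
    have h3 : ‖∫ s in t..x, (f s - f t)‖ ≤ ∫ s in Ι t x, ‖f s - f t‖ :=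
      intervalIntegral.norm_integral_le_integral_norm_uIoc
    have hsub : Ι t x ⊆ closedBall t |x - t| := by
      intro s hs
      have h1' : min t x < s := hs.1
      have h2' : s ≤ max t x := hs.2
      rw [mem_closedBall, Real.dist_eq, abs_le]
      rcases le_total t x with h | h
      · rw [min_eq_left h] at h1'; rw [max_eq_right h] at h2'
        rw [abs_of_nonneg (sub_nonneg.2 h)]; constructor <;> linarith
      · rw [min_eq_right h] at h1'; rw [max_eq_left h] at h2'
        rw [abs_of_nonpos (sub_nonpos.2 h)]; constructor <;> linarith
    have hintcb : IntegrableOn (fun s => ‖f s - f t‖) (closedBall t |x - t|) volume :=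
      ((hf.integrableOn_isCompact (isCompact_closedBall _ _)).sub
        (integrableOn_const (by exact measure_closedBall_lt_top.ne))).norm
    have h4 : ∫ s in Ι t x, ‖f s - f t‖ ≤ ∫ s in closedBall t |x - t|, ‖f s - f t‖ :=
      setIntegral_mono_set hintcb (Eventually.of_forall fun s => norm_nonneg _)
        (HasSubset.Subset.eventuallyLE hsub)
    have hvol : (volume (closedBall t |x - t|)).toReal = 2 * |x - t| := by
      rw [Real.volume_closedBall, ENNReal.toReal_ofReal (by positivity)]
    rw [setAverage_eq]
    have hxt : (0:ℝ) < |x - t| := abs_pos.2 (sub_ne_zero.2 hx)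
    rw [smul_eq_mul, measureReal_def, hvol]
    calc ‖x - t‖⁻¹ * ‖∫ s in t..x, (f s - f t)‖
        ≤ ‖x - t‖⁻¹ * ∫ s in closedBall t |x - t|, ‖f s - f t‖ := by
          apply mul_le_mul_of_nonneg_left (h3.trans h4) (by positivity)
      _ = 2 * ((2 * |x - t|)⁻¹ * ∫ s in closedBall t |x - t|, ‖f s - f t‖) := by
          rw [Real.norm_eq_abs]; field_simp
  have hb : Tendsto (fun x : ℝ => 2 * ⨍ y in closedBall t |x - t|, ‖f y - f t‖) (𝓝[≠] t) (𝓝 0) := by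
    have habs : Tendsto (fun x : ℝ => |x - t|) (𝓝[≠] t) (𝓝[>] 0) := by
      apply tendsto_nhdsWithin_of_tendsto_nhds_of_eventually_within
      · have hc : Continuous fun x : ℝ => |x - t| := (continuous_id.sub continuous_const).abs
        have h5 : Tendsto (fun x : ℝ => |x - t|) (𝓝[≠] t) (𝓝 (|t - t|)) :=
          (hc.tendsto t).mono_left nhdsWithin_le_nhds
        simpa using h5
      · filter_upwards [self_mem_nhdsWithin] with x hx
        exact abs_pos.2 (sub_ne_zero.2 hx)
    have h2 := (ht'.comp habs).const_mul (2:ℝ)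
    simpa using h2
  have h0 : Tendsto (fun x => ‖x - t‖⁻¹ *
      ‖(∫ s in (0:ℝ)..x, f s) - (∫ s in (0:ℝ)..t, f s) - (x - t) • f t‖) (𝓝[≠] t) (𝓝 0) := by
    apply squeeze_zero' (Eventually.of_forall fun x => by positivity) _ hb
    filter_upwards [self_mem_nhdsWithin] with x hx
    exact key x hx
  rw [← nhdsNE_sup_pure t]
  rw [Filter.tendsto_sup]
  refine ⟨h0, ?_⟩
  have h6 := tendsto_pure_nhds (fun x => ‖x - t‖⁻¹ *
      ‖(∫ s in (0:ℝ)..x, f s) - (∫ s in (0:ℝ)..t, f s) - (x - t) • f t‖) t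
  simpa using h6

open Filter Metric Topology Interval in
/-- for `z(t) = ∫₀^t ξ(t-τ) y(τ) dτ` with `ξ` absolutely continuous,
nonnegative, `ξ' ≤ -ξ(0) ξ` a.e., `ξ(0) > 0`, and `y ∈ L¹_loc` nonnegative, the
function `z` is absolutely continuous (with a.e. derivative `z'` and FTC
representation), `z(0) = 0`, and `(1/ξ(0)) z'(t) + z(t) ≤ y(t)` a.e. -/
theorem stmt2 (ξ ξ' y : ℝ → ℝ)
    (hξnonneg : ∀ t, 0 ≤ t → 0 ≤ ξ t)
    (hξderiv : ∀ᵐ t ∂(volume.restrict (Ioi (0:ℝ))), HasDerivAt ξ (ξ' t) t)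
    (hξFTC : ∀ t, 0 ≤ t → ξ t = ξ 0 + ∫ s in (0:ℝ)..t, ξ' s)
    (hξloc : ∀ T > (0:ℝ), IntegrableOn ξ' (Icc 0 T))
    (hξineq : ∀ᵐ t ∂(volume.restrict (Ioi (0:ℝ))), ξ' t ≤ -ξ 0 * ξ t)
    (hξ0 : 0 < ξ 0)
    (hynonneg : ∀ t, 0 ≤ t → 0 ≤ y t)
    (hyloc : ∀ T > (0:ℝ), IntegrableOn y (Icc 0 T)) :
    (fun t => ∫ τ in (0:ℝ)..t, ξ (t - τ) * y τ) 0 = 0 ∧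
    ∃ z' : ℝ → ℝ,
      (∀ T > (0:ℝ), IntegrableOn z' (Icc 0 T)) ∧
      (∀ t, 0 ≤ t →
        (∫ τ in (0:ℝ)..t, ξ (t - τ) * y τ) = ∫ s in (0:ℝ)..t, z' s) ∧
      (∀ᵐ t ∂(volume.restrict (Ioi (0:ℝ))),
        HasDerivAt (fun t => ∫ τ in (0:ℝ)..t, ξ (t - τ) * y τ) (z' t) t) ∧
      (∀ᵐ t ∂(volume.restrict (Ioi (0:ℝ))),
        (1 / ξ 0) * z' t + (∫ τ in (0:ℝ)..t, ξ (t - τ) * y τ) ≤ y t) := by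
  -- the candidate derivative
  set g : ℝ → ℝ := fun s => ∫ τ in (0:ℝ)..s, ξ' (s - τ) * y τ with hgdef
  set Z : ℝ → ℝ := fun s => if 0 < s then ξ 0 * y s + g s else 0 with hZdef
  -- continuity of ξ on [0, ∞)
  have hξcont : ContinuousOn ξ (Ici 0) := by
    intro t ht
    have hT : (0:ℝ) < t + 1 := by have := ht.out; linarith
    have hcont : ContinuousOn (fun x => ξ 0 + ∫ s in (0:ℝ)..x, ξ' s) (Icc 0 (t+1)) := by
      apply continuousOn_const.add
      have hi : IntegrableOn ξ' (uIcc 0 (t+1)) volume := by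
        rw [uIcc_of_le hT.le]; exact hξloc _ hT
      have := intervalIntegral.continuousOn_primitive_interval hi
      rwa [uIcc_of_le hT.le] at this
    have heq : EqOn ξ (fun x => ξ 0 + ∫ s in (0:ℝ)..x, ξ' s) (Icc 0 (t+1)) :=
      fun x hx => hξFTC x hx.1
    have h2 := (hcont.congr heq).continuousWithinAt (⟨ht.out, by linarith⟩ : t ∈ Icc 0 (t+1))
    apply h2.mono_of_mem_nhdsWithin
    have h3 : Iic (t+1) ∈ 𝓝[Ici 0] t :=
      nhdsWithin_le_nhds (Iic_mem_nhds (by linarith [ht.out]))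
    have h4 := Filter.inter_mem self_mem_nhdsWithin h3
    simpa [Icc, Ici, Iic, Set.inter_def] using h4
  -- integrability of the integrand of z
  have hzint : ∀ t : ℝ, 0 < t → IntegrableOn (fun τ => ξ (t - τ) * y τ) (Ioc 0 t) := by
    intro t ht
    have hmap : MapsTo (fun τ : ℝ => t - τ) (Icc 0 t) (Ici 0) := by
      intro τ hτ; simp only [mem_Ici]; linarith [hτ.2]
    have hc : ContinuousOn (fun τ => ξ (t - τ)) (Icc 0 t) :=
      hξcont.comp (continuous_const.sub continuous_id).continuousOn hmap
    obtain ⟨C, hC⟩ := (isCompact_Icc (a := (0:ℝ)) (b := t)).exists_bound_of_continuousOn hc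
    have hy : IntegrableOn y (Ioc 0 t) := (hyloc t ht).mono_set Ioc_subset_Icc_self
    apply Integrable.bdd_mul (c := C) hy
    · exact (hc.aestronglyMeasurable measurableSet_Icc).mono_set Ioc_subset_Icc_self
    · exact ae_restrict_of_forall_mem measurableSet_Ioc fun τ hτ => hC τ (Ioc_subset_Icc_self hτ)
  -- integrability of g, and a.e. slice integrability
  have hgaux : ∀ T : ℝ, 0 < T → IntegrableOn g (Ioc 0 T) volume ∧
      (∀ᵐ u : ℝ, u ∈ Ioc 0 T → IntegrableOn (fun τ => ξ' (u - τ) * y τ) (Ioc 0 u) volume) := by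
    intro T hT
    set yt : ℝ → ℝ := indicator (Ioc 0 T) y with hytdef
    set xt : ℝ → ℝ := indicator (Ioc 0 T) ξ' with hxtdef
    have hyt : Integrable yt volume := by
      rw [hytdef, integrable_indicator_iff measurableSet_Ioc]
      exact (hyloc T hT).mono_set Ioc_subset_Icc_self
    have hxt : Integrable xt volume := by
      rw [hxtdef, integrable_indicator_iff measurableSet_Ioc]
      exact (hξloc T hT).mono_set Ioc_subset_Icc_self
    have key : ∀ u ∈ Ioc 0 T, ∀ᵐ τ : ℝ, τ ∈ Ι (0:ℝ) u →
        yt τ * xt (u - τ) = ξ' (u - τ) * y τ := by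
      intro u hu
      have hu0 : ∀ᵐ τ : ℝ, τ ≠ u := by
        have h : ({u} : Set ℝ)ᶜ ∈ ae (volume : Measure ℝ) :=
          compl_mem_ae_iff.2 (measure_singleton u)
        filter_upwards [h] with τ hτ using by simpa using hτ
      filter_upwards [hu0] with τ hτne hτ
      rw [uIoc_of_le hu.1.le] at hτ
      have hτu : τ < u := lt_of_le_of_ne hτ.2 hτne
      rw [hytdef, hxtdef,
        indicator_of_mem (show τ ∈ Ioc 0 T from ⟨hτ.1, le_trans hτ.2 hu.2⟩),
        indicator_of_mem (show u - τ ∈ Ioc 0 T from ⟨by linarith, by linarith [hu.2, hτ.1]⟩)]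
      ring
    constructor
    · have hpos : Integrable (posConvolution yt xt (ContinuousLinearMap.mul ℝ ℝ) volume) volume :=
        integrable_posConvolution hyt.integrableOn hxt.integrableOn _
      apply (hpos.integrableOn (s := Ioc 0 T)).congr_fun _ measurableSet_Ioc
      intro u hu
      show posConvolution yt xt (ContinuousLinearMap.mul ℝ ℝ) volume u = g u
      unfold posConvolution
      rw [indicator_of_mem (show u ∈ Ioi (0:ℝ) from hu.1)]
      refine intervalIntegral.integral_congr_ae ?_
      filter_upwards [key u hu] with τ h hτ
      simpa using h hτ
    · have hae := hyt.ae_convolution_exists (ContinuousLinearMap.mul ℝ ℝ) hxt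
      filter_upwards [hae] with u hconv hu
      have h1 : Integrable (fun τ => yt τ * xt (u - τ)) volume := by
        simpa [ConvolutionExistsAt] using hconv
      rw [integrableOn_Ioc_iff_integrableOn_Ioo]
      apply (h1.integrableOn (s := Ioo 0 u)).congr_fun _ measurableSet_Ioo
      intro τ hτ
      show yt τ * xt (u - τ) = ξ' (u - τ) * y τ
      rw [hytdef, hxtdef,
        indicator_of_mem (show τ ∈ Ioc 0 T from ⟨hτ.1, le_trans hτ.2.le hu.2⟩),
        indicator_of_mem (show u - τ ∈ Ioc 0 T from ⟨by linarith [hτ.2], by linarith [hu.2, hτ.1]⟩)]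
      ring
  -- the Fubini identity
  have hfub : ∀ t : ℝ, 0 < t → ∫ s in Ioc 0 t, g s
      = (∫ τ in Ioc 0 t, ξ (t - τ) * y τ) - ξ 0 * ∫ τ in Ioc 0 t, y τ := by
    intro t ht
    set yt : ℝ → ℝ := indicator (Ioc 0 t) y with hytdef
    set xt : ℝ → ℝ := indicator (Ioc 0 t) ξ' with hxtdef
    have hyt : Integrable yt volume := by
      rw [hytdef, integrable_indicator_iff measurableSet_Ioc]
      exact (hyloc t ht).mono_set Ioc_subset_Icc_self
    have hxt : Integrable xt volume := by
      rw [hxtdef, integrable_indicator_iff measurableSet_Ioc]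
      exact (hξloc t ht).mono_set Ioc_subset_Icc_self
    have hprod : Integrable (fun p : ℝ × ℝ => yt p.2 * xt (p.1 - p.2)) (volume.prod volume) := by
      have h := hyt.convolution_integrand (ContinuousLinearMap.mul ℝ ℝ) hxt
      simpa using h
    have hprod' : Integrable (fun p : ℝ × ℝ => yt p.2 * xt (p.1 - p.2))
        ((volume.restrict (Ioc 0 t)).prod volume) := by
      have e : (volume.restrict (Ioc 0 t)).prod (volume : Measure ℝ)
          = (volume.prod volume).restrict ((Ioc 0 t) ×ˢ univ) := by
        rw [← Measure.prod_restrict, Measure.restrict_univ]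
      rw [e]
      exact hprod.integrableOn
    have hswap := integral_integral_swap (f := fun u τ => yt τ * xt (u - τ)) hprod'
    have hL : ∀ u ∈ Ioc 0 t, (∫ τ, yt τ * xt (u - τ)) = g u := by
      intro u hu
      have hu0 : ∀ᵐ τ : ℝ, τ ≠ u := by
        have h : ({u} : Set ℝ)ᶜ ∈ ae (volume : Measure ℝ) :=
          compl_mem_ae_iff.2 (measure_singleton u)
        filter_upwards [h] with τ hτ using by simpa using hτ
      have hue : ∀ᵐ τ : ℝ, yt τ * xt (u - τ)
          = indicator (Ioc 0 u) (fun τ => ξ' (u - τ) * y τ) τ := by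
        filter_upwards [hu0] with τ hτ
        by_cases h1 : τ ∈ Ioc 0 u
        · have hτu : τ < u := lt_of_le_of_ne h1.2 hτ
          rw [indicator_of_mem h1, hytdef, hxtdef,
            indicator_of_mem (show τ ∈ Ioc 0 t from ⟨h1.1, le_trans h1.2 hu.2⟩),
            indicator_of_mem (show u - τ ∈ Ioc 0 t from ⟨by linarith, by linarith [hu.2, h1.1]⟩)]
          ring
        · rw [indicator_of_notMem h1]
          simp only [mem_Ioc, not_and, not_le] at h1
          rcases le_or_gt τ 0 with h2 | h2
          · rw [hytdef, indicator_of_notMem (by simp [h2] : τ ∉ Ioc 0 t), zero_mul]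
          · have h3 : u < τ := h1 h2
            rw [hxtdef, indicator_of_notMem
              (by simp only [mem_Ioc, not_and, not_le]; intro h; linarith : u - τ ∉ Ioc 0 t),
              mul_zero]
      calc (∫ τ, yt τ * xt (u - τ))
          = ∫ τ, indicator (Ioc 0 u) (fun τ => ξ' (u - τ) * y τ) τ := integral_congr_ae hue
        _ = ∫ τ in Ioc 0 u, ξ' (u - τ) * y τ := integral_indicator measurableSet_Ioc
        _ = g u := (intervalIntegral.integral_of_le hu.1.le).symm
    have hR : ∀ τ : ℝ, (∫ u in Ioc 0 t, yt τ * xt (u - τ))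
        = indicator (Ioc 0 t) (fun τ => y τ * (ξ (t - τ) - ξ 0)) τ := by
      intro τ
      rw [integral_const_mul]
      by_cases hτ : τ ∈ Ioc 0 t
      · rw [indicator_of_mem hτ, hytdef, indicator_of_mem hτ]
        congr 1
        have h1 : ∫ u in Ioc 0 t, xt (u - τ) = ∫ u in (0:ℝ)..t, xt (u - τ) :=
          (intervalIntegral.integral_of_le ht.le).symm
        rw [h1, intervalIntegral.integral_comp_sub_right (fun s => xt s) τ,
          intervalIntegral.integral_of_le (by linarith [hτ.2] : (0:ℝ) - τ ≤ t - τ),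
          hxtdef, setIntegral_indicator measurableSet_Ioc]
        have h2 : Ioc (0 - τ) (t - τ) ∩ Ioc 0 t = Ioc 0 (t - τ) := by
          ext s; simp only [mem_inter_iff, mem_Ioc]
          constructor
          · rintro ⟨⟨_, h2⟩, ⟨h3, _⟩⟩; exact ⟨h3, h2⟩
          · rintro ⟨h1', h2'⟩
            exact ⟨⟨by linarith [hτ.1], h2'⟩, h1', by linarith [hτ.1]⟩
        rw [h2, ← intervalIntegral.integral_of_le (by linarith [hτ.2] : (0:ℝ) ≤ t - τ)]
        have h3 := hξFTC (t - τ) (by linarith [hτ.2])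
        linarith
      · rw [indicator_of_notMem hτ, hytdef, indicator_of_notMem hτ, zero_mul]
    calc ∫ s in Ioc 0 t, g s
        = ∫ u in Ioc 0 t, (∫ τ, yt τ * xt (u - τ)) :=
          (setIntegral_congr_fun measurableSet_Ioc fun u hu => hL u hu).symm
      _ = ∫ τ, (∫ u in Ioc 0 t, yt τ * xt (u - τ)) := hswap
      _ = ∫ τ, indicator (Ioc 0 t) (fun τ => y τ * (ξ (t - τ) - ξ 0)) τ :=
          integral_congr_ae (Eventually.of_forall hR)
      _ = ∫ τ in Ioc 0 t, y τ * (ξ (t - τ) - ξ 0) := integral_indicator measurableSet_Ioc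
      _ = ∫ τ in Ioc 0 t, (ξ (t - τ) * y τ - ξ 0 * y τ) :=
          setIntegral_congr_fun measurableSet_Ioc fun τ _ => by ring
      _ = (∫ τ in Ioc 0 t, ξ (t - τ) * y τ) - ∫ τ in Ioc 0 t, ξ 0 * y τ :=
          integral_sub (hzint t ht) (((hyloc t ht).mono_set Ioc_subset_Icc_self).const_mul _)
      _ = (∫ τ in Ioc 0 t, ξ (t - τ) * y τ) - ξ 0 * ∫ τ in Ioc 0 t, y τ := by
          rw [integral_const_mul]
  -- integrability of Z
  have hZIoc : ∀ T : ℝ, 0 < T → IntegrableOn Z (Ioc 0 T) := by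
    intro T hT
    apply IntegrableOn.congr_fun
      (f := fun s => ξ 0 * y s + g s)
      ((((hyloc T hT).mono_set Ioc_subset_Icc_self).const_mul (ξ 0)).add (hgaux T hT).1)
      _ measurableSet_Ioc
    intro s hs
    show (fun s => ξ 0 * y s + g s) s = Z s
    rw [hZdef]
    simp only [if_pos hs.1]
  have hZint : ∀ T > (0:ℝ), IntegrableOn Z (Icc 0 T) := by
    intro T hT
    rw [integrableOn_Icc_iff_integrableOn_Ioc]
    exact hZIoc T hT
  -- FTC representation
  have hFTCz : ∀ t : ℝ, 0 ≤ t →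
      (∫ τ in (0:ℝ)..t, ξ (t - τ) * y τ) = ∫ s in (0:ℝ)..t, Z s := by
    intro t ht
    rcases eq_or_lt_of_le ht with h | h
    · rw [← h]; simp
    · rw [intervalIntegral.integral_of_le ht, intervalIntegral.integral_of_le ht]
      have h1 : ∫ s in Ioc 0 t, Z s = ∫ s in Ioc 0 t, (ξ 0 * y s + g s) := by
        apply setIntegral_congr_fun measurableSet_Ioc
        intro s hs
        show Z s = _
        rw [hZdef]; simp only [if_pos hs.1]
      rw [h1, integral_add (((hyloc t h).mono_set Ioc_subset_Icc_self).const_mul (ξ 0))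
        (hgaux t h).1, hfub t h, integral_const_mul]
      ring
  -- local integrability of Z on ℝ
  have hloc : LocallyIntegrable Z volume := by
    rw [locallyIntegrable_iff]
    intro k hk
    obtain ⟨r, hr⟩ := hk.isBounded.subset_closedBall 0
    have hr1 : (0:ℝ) < max r 1 := lt_max_of_lt_right one_pos
    have hsub : k ⊆ Iic 0 ∪ Ioc 0 (max r 1) := by
      intro x hx
      rcases le_or_gt x 0 with h | h
      · exact Or.inl h
      · refine Or.inr ⟨h, ?_⟩
        have := hr hx
        rw [mem_closedBall, Real.dist_eq, sub_zero] at this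
        exact le_trans (le_abs_self x) (le_trans this (le_max_left _ _))
    apply IntegrableOn.mono_set _ hsub
    apply IntegrableOn.union
    · apply IntegrableOn.congr_fun (f := fun _ => (0:ℝ)) (integrableOn_zero) _ measurableSet_Iic
      intro s hs
      show (0:ℝ) = Z s
      rw [hZdef]
      simp only [if_neg (not_lt.2 hs.out)]
    · exact hZIoc _ hr1
  -- derivative a.e.
  have hderiv : ∀ᵐ t ∂(volume.restrict (Ioi (0:ℝ))),
      HasDerivAt (fun t => ∫ τ in (0:ℝ)..t, ξ (t - τ) * y τ) (Z t) t := by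
    have h1 := ae_hasDerivAt_primitive Z hloc
    filter_upwards [ae_restrict_of_ae h1, ae_restrict_mem measurableSet_Ioi] with t ht hmem
    exact ht.congr_of_eventuallyEq
      (Filter.eventuallyEq_of_mem (Ioi_mem_nhds hmem) (fun x hx => hFTCz x (le_of_lt hx)))
  -- the differential inequality a.e.
  have hineqz : ∀ᵐ t ∂(volume.restrict (Ioi (0:ℝ))),
      (1 / ξ 0) * Z t + (∫ τ in (0:ℝ)..t, ξ (t - τ) * y τ) ≤ y t := by
    have hallslice : ∀ᵐ u : ℝ, ∀ n : ℕ, u ∈ Ioc 0 ((n:ℝ)+1) →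
        IntegrableOn (fun τ => ξ' (u - τ) * y τ) (Ioc 0 u) :=
      ae_all_iff.2 fun n => (hgaux ((n:ℝ)+1) (by positivity)).2
    have hineqae : ∀ᵐ τ : ℝ, τ ∈ Ioi (0:ℝ) → ξ' τ ≤ -ξ 0 * ξ τ :=
      (ae_restrict_iff' measurableSet_Ioi).1 hξineq
    filter_upwards [ae_restrict_of_ae hallslice, ae_restrict_mem measurableSet_Ioi] with t hsl hmem
    have ht : (0:ℝ) < t := hmem
    have hslt : IntegrableOn (fun τ => ξ' (t - τ) * y τ) (Ioc 0 t) := by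
      refine hsl ⌈t⌉₊ ⟨ht, ?_⟩
      have := Nat.le_ceil t; linarith
    have htran : ∀ᵐ τ : ℝ, τ ∈ Ioo 0 t → ξ' (t - τ) * y τ ≤ -ξ 0 * (ξ (t - τ) * y τ) := by
      have h := (Measure.measurePreserving_sub_left volume t).quasiMeasurePreserving.ae hineqae
      filter_upwards [h] with τ hτ hmemτ
      have h1 := hτ (show t - τ ∈ Ioi 0 by simp only [mem_Ioi]; linarith [hmemτ.2])
      have h2 := hynonneg τ hmemτ.1.le
      nlinarith [mul_le_mul_of_nonneg_right h1 h2]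
    have hg_le : g t ≤ -ξ 0 * ∫ τ in Ioc 0 t, ξ (t - τ) * y τ := by
      have h1 : g t = ∫ τ in Ioo 0 t, ξ' (t - τ) * y τ := by
        show (∫ τ in (0:ℝ)..t, ξ' (t - τ) * y τ) = _
        rw [intervalIntegral.integral_of_le ht.le, integral_Ioc_eq_integral_Ioo]
      have h2 : ∫ τ in Ioo 0 t, ξ' (t - τ) * y τ ≤ ∫ τ in Ioo 0 t, -ξ 0 * (ξ (t - τ) * y τ) :=
        setIntegral_mono_on_ae (hslt.mono_set Ioo_subset_Ioc_self)
          ((show IntegrableOn (fun τ => -ξ 0 * (ξ (t - τ) * y τ)) (Ioc 0 t) volume from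
            (hzint t ht).const_mul (-ξ 0)).mono_set Ioo_subset_Ioc_self)
          measurableSet_Ioo htran
      have h3 : ∫ τ in Ioo 0 t, -ξ 0 * (ξ (t - τ) * y τ)
          = -ξ 0 * ∫ τ in Ioc 0 t, ξ (t - τ) * y τ := by
        rw [integral_const_mul, ← integral_Ioc_eq_integral_Ioo]
      rw [h1]
      rw [h3] at h2
      exact h2
    show (1 / ξ 0) * Z t + (∫ τ in (0:ℝ)..t, ξ (t - τ) * y τ) ≤ y t
    rw [intervalIntegral.integral_of_le ht.le, hZdef]
    simp only [if_pos ht]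
    set zt := ∫ τ in Ioc 0 t, ξ (t - τ) * y τ with hzt
    have hne : ξ 0 ≠ 0 := ne_of_gt hξ0
    have expand : (1/ξ 0) * (ξ 0 * y t + g t) = y t + (1/ξ 0) * g t := by field_simp
    have hmul : (1/ξ 0) * g t ≤ (1/ξ 0) * (-ξ 0 * zt) :=
      mul_le_mul_of_nonneg_left hg_le (by positivity)
    have hval : (1/ξ 0) * (-ξ 0 * zt) = -zt := by field_simp
    rw [expand]
    linarith
  exact ⟨by simp, Z, hZint, hFTCz, hderiv, hineqz⟩
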